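/- Let n ≥ 0 and ρ = (ρ_0, ..., ρ_n) ∈ ℂ^{n+1} with Im(ρ̄_j ρ_i) > 0 for all 0 ≤ i < j ≤ n. Then for every pair of real sequences (x_i), (y_i) indexed by 0 ≤ i ≤ n such that there exist c_x ≤ c_y with x_i = 0 for i < c_x, x_{c_x} > 0, y_i = 0 for i < c_y, y_{c_y} > 0, the polynomial ε ↦ Im( conj(Σ_i ρ_{n−i} x_i ε^i) · Σ_j ρ_{n−j} y_j ε^j ) is either identically zero, eventually positive on (0, ε₀), or eventually negative on (0, ε₀) for some ε₀ > 0; moreover it is identically zero if and only if c_x = c_y and y_i x_{c_x} = x_i y_{c_x} for all i. -/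

import Mathlib

open Finset Polynomial

/-- The real polynomial whose evaluation is `Im(conj(U(ε)) V(ε))`. -/
noncomputable def QPaux (n : ℕ) (ρ : ℕ → ℂ) (u v : ℕ → ℝ) : Polynomial ℝ :=
  ∑ i ∈ range (n + 1), ∑ j ∈ range (n + 1),
    Polynomial.C (u i * v j * ((starRingEnd ℂ) (ρ (n - i)) * ρ (n - j)).im)
      * Polynomial.X ^ (i + j)

lemma QPaux_eval (n : ℕ) (ρ : ℕ → ℂ) (u v : ℕ → ℝ) (ε : ℝ) :
    ((starRingEnd ℂ) (∑ i ∈ range (n + 1), ρ (n - i) * (u i : ℝ) * ε ^ i) *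
      ∑ j ∈ range (n + 1), ρ (n - j) * (v j : ℝ) * ε ^ j).im
    = (QPaux n ρ u v).eval ε := by
  rw [QPaux, map_sum, Finset.sum_mul_sum, Polynomial.eval_finset_sum, Complex.im_sum]
  refine Finset.sum_congr rfl fun i _ => ?_
  rw [Polynomial.eval_finset_sum, Complex.im_sum]
  refine Finset.sum_congr rfl fun j _ => ?_
  simp only [Polynomial.eval_mul, Polynomial.eval_C, Polynomial.eval_pow, Polynomial.eval_X]
  rw [show (starRingEnd ℂ) (ρ (n - i) * (u i : ℝ) * (ε : ℂ) ^ i) *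
        (ρ (n - j) * (v j : ℝ) * (ε : ℂ) ^ j)
      = ((starRingEnd ℂ) (ρ (n - i)) * ρ (n - j)) *
        ((u i * v j * ε ^ (i + j) : ℝ) : ℂ) by
    simp only [map_mul, map_pow, Complex.conj_ofReal]
    push_cast
    ring]
  rw [Complex.mul_im, Complex.ofReal_re, Complex.ofReal_im, mul_zero, zero_add]
  ring

lemma QPaux_coeff (n : ℕ) (ρ : ℕ → ℂ) (u v : ℕ → ℝ) (c k : ℕ) (hcn : c ≤ n) (hkn : k ≤ n)
    (hu : ∀ i, i < c → u i = 0) (hv : ∀ j, j < k → v j = 0) :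
    (QPaux n ρ u v).coeff (c + k)
      = u c * v k * ((starRingEnd ℂ) (ρ (n - c)) * ρ (n - k)).im := by
  rw [QPaux, Polynomial.finset_sum_coeff,
    Finset.sum_eq_single_of_mem c (Finset.mem_range.mpr (by omega))]
  · rw [Polynomial.finset_sum_coeff,
      Finset.sum_eq_single_of_mem k (Finset.mem_range.mpr (by omega))]
    · rw [Polynomial.coeff_C_mul, Polynomial.coeff_X_pow, if_pos rfl, mul_one]
    · intro j _ hne
      rw [Polynomial.coeff_C_mul, Polynomial.coeff_X_pow,
        if_neg (by omega : ¬ (c + k = c + j)), mul_zero]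
  · intro i _ hne
    rw [Polynomial.finset_sum_coeff]
    apply Finset.sum_eq_zero
    intro j _
    rw [Polynomial.coeff_C_mul, Polynomial.coeff_X_pow]
    rcases lt_or_gt_of_ne hne with h | h
    · rw [hu i h, zero_mul, zero_mul, zero_mul]
    · by_cases hij : c + k = i + j
      · have hjk : j < k := by omega
        rw [hv j hjk, mul_zero, zero_mul, zero_mul]
      · rw [if_neg hij, mul_zero]

lemma poly_sign (p : Polynomial ℝ) (hp : p ≠ 0) :
    (∃ ε₀ > (0:ℝ), ∀ ε : ℝ, 0 < ε → ε < ε₀ → 0 < p.eval ε) ∨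
    (∃ ε₀ > (0:ℝ), ∀ ε : ℝ, 0 < ε → ε < ε₀ → p.eval ε < 0) := by
  have hdvd : (Polynomial.X : Polynomial ℝ) ^ p.natTrailingDegree ∣ p :=
    Polynomial.X_pow_dvd_iff.mpr fun d hd =>
      Polynomial.coeff_eq_zero_of_lt_natTrailingDegree hd
  have h1 : p.coeff p.natTrailingDegree ≠ 0 := by
    rw [← Polynomial.trailingCoeff]
    exact fun h => hp (Polynomial.trailingCoeff_eq_zero.mp h)
  generalize hm : p.natTrailingDegree = m at hdvd h1
  obtain ⟨q, hq⟩ := hdvd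
  have hq0 : q.eval 0 ≠ 0 := by
    have h2 : p.coeff m = q.coeff 0 := by
      rw [hq]
      simpa using Polynomial.coeff_X_pow_mul q m 0
    rw [← Polynomial.coeff_zero_eq_eval_zero, ← h2]
    exact h1
  have heval : ∀ ε : ℝ, p.eval ε = ε ^ m * q.eval ε := by
    intro ε; rw [hq]; simp
  have hcont : ContinuousAt (fun x => q.eval x) 0 := q.continuousAt
  rw [Metric.continuousAt_iff] at hcont
  obtain ⟨δ, hδ, hball⟩ := hcont |q.eval 0| (abs_pos.mpr hq0)
  rcases hq0.lt_or_gt with hneg | hpos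
  · right
    refine ⟨δ, hδ, fun ε hε1 hε2 => ?_⟩
    have hd : dist ε (0:ℝ) < δ := by
      rw [Real.dist_eq, sub_zero, abs_of_pos hε1]; exact hε2
    have hb := hball hd
    rw [Real.dist_eq, abs_of_neg hneg] at hb
    have h3 := (abs_lt.mp hb).2
    have hqε : q.eval ε < 0 := by linarith
    rw [heval]
    exact mul_neg_of_pos_of_neg (pow_pos hε1 _) hqε
  · left
    refine ⟨δ, hδ, fun ε hε1 hε2 => ?_⟩
    have hd : dist ε (0:ℝ) < δ := by
      rw [Real.dist_eq, sub_zero, abs_of_pos hε1]; exact hε2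
    have hb := hball hd
    rw [Real.dist_eq, abs_of_pos hpos] at hb
    have h3 := (abs_lt.mp hb).1
    have hqε : 0 < q.eval ε := by linarith
    rw [heval]
    exact mul_pos (pow_pos hε1 _) hqε

open Finset in
/-- Trichotomy for adapted stability vectors: if `Im(ρ̄ⱼ ρᵢ) > 0` for all
`i < j ≤ n` and `x, y` have leading positive entries at `c_x ≤ c_y ≤ n`, then
`F(ε) = Im(conj(X(ε)) Y(ε))` is identically zero, eventually positive, or
eventually negative on some `(0, ε₀)`; and it is identically zero iff
`c_x = c_y` and the degree vectors are proportional. -/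
theorem trichotomy_adapted (n : ℕ) (ρ : ℕ → ℂ)
    (hρ : ∀ i j, i < j → j ≤ n → 0 < ((starRingEnd ℂ) (ρ j) * ρ i).im)
    (x y : ℕ → ℝ) (cx cy : ℕ) (hc : cx ≤ cy) (hcy : cy ≤ n)
    (hx0 : ∀ i, i < cx → x i = 0) (hxc : 0 < x cx)
    (hy0 : ∀ i, i < cy → y i = 0) (hyc : 0 < y cy) :
    let F : ℝ → ℝ := fun ε =>
      ((starRingEnd ℂ) (∑ i ∈ range (n + 1), ρ (n - i) * (x i : ℝ) * ε ^ i) *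
        ∑ j ∈ range (n + 1), ρ (n - j) * (y j : ℝ) * ε ^ j).im
    ((∀ ε : ℝ, F ε = 0) ∨
      (∃ ε₀ > (0 : ℝ), ∀ ε : ℝ, 0 < ε → ε < ε₀ → 0 < F ε) ∨
      (∃ ε₀ > (0 : ℝ), ∀ ε : ℝ, 0 < ε → ε < ε₀ → F ε < 0)) ∧
    ((∀ ε : ℝ, F ε = 0) ↔ (cx = cy ∧ ∀ i ≤ n, y i * x cx = x i * y cx)) := by
  intro F
  have hcxn : cx ≤ n := hc.trans hcy
  have hxcne : x cx ≠ 0 := ne_of_gt hxc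
  set t : ℝ := y cx / x cx with ht
  set w : ℕ → ℝ := fun j => y j - t * x j with hwdef
  have hF : ∀ ε : ℝ, F ε = (QPaux n ρ x y).eval ε := fun ε => QPaux_eval n ρ x y ε
  have him0 : ∀ z : ℂ, ((starRingEnd ℂ) z * z).im = 0 := by
    intro z
    rw [Complex.mul_im, Complex.conj_re, Complex.conj_im]
    ring
  have hxx : QPaux n ρ x x = 0 := by
    apply Polynomial.funext
    intro ε
    rw [Polynomial.eval_zero, ← QPaux_eval n ρ x x ε]
    exact him0 _
  have hlin : QPaux n ρ x y = QPaux n ρ x w + Polynomial.C t * QPaux n ρ x x := by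
    rw [QPaux, QPaux, QPaux, Finset.mul_sum, ← Finset.sum_add_distrib]
    refine Finset.sum_congr rfl fun i _ => ?_
    rw [Finset.mul_sum, ← Finset.sum_add_distrib]
    refine Finset.sum_congr rfl fun j _ => ?_
    rw [← mul_assoc, ← Polynomial.C_mul, ← add_mul, ← Polynomial.C_add]
    congr 2
    simp only [hwdef]
    ring
  have hxw : QPaux n ρ x w = QPaux n ρ x y := by
    rw [hlin, hxx, mul_zero, add_zero]
  have hanti : ∀ a b : ℂ,
      ((starRingEnd ℂ) a * b).im = -((starRingEnd ℂ) b * a).im := by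
    intro a b
    rw [Complex.mul_im, Complex.mul_im, Complex.conj_re, Complex.conj_im,
      Complex.conj_re, Complex.conj_im]
    ring
  have key : (∀ ε : ℝ, F ε = 0) → ∀ k, k ≤ n → w k = 0 := by
    intro hFz
    have hP0 : QPaux n ρ x w = 0 := by
      rw [hxw]
      apply Polynomial.funext
      intro ε
      rw [Polynomial.eval_zero, ← hF ε]
      exact hFz ε
    intro k
    induction k using Nat.strong_induction_on with
    | _ k IH =>
      intro hkn
      by_cases hkc : k = cx
      · subst hkc
        simp only [hwdef, ht]
        field_simp
        ring
      · have hw0 : ∀ j, j < k → w j = 0 := fun j hj => IH j hj (by omega)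
        have hco := QPaux_coeff n ρ x w cx k hcxn hkn hx0 hw0
        rw [hP0, Polynomial.coeff_zero] at hco
        have hm : ((starRingEnd ℂ) (ρ (n - cx)) * ρ (n - k)).im ≠ 0 := by
          rcases lt_or_gt_of_ne hkc with h | h
          · rw [hanti]
            exact neg_ne_zero.mpr (ne_of_gt (hρ (n - cx) (n - k) (by omega) (by omega)))
          · exact ne_of_gt (hρ (n - k) (n - cx) (by omega) (by omega))
        have h1 : x cx * w k = 0 := by
          rcases mul_eq_zero.mp hco.symm with h' | h'
          · exact h'
          · exact absurd h' hm
        rcases mul_eq_zero.mp h1 with h' | h'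
        · exact absurd h' hxcne
        · exact h'
  constructor
  · rcases eq_or_ne (QPaux n ρ x y) 0 with h | h
    · exact Or.inl fun ε => by rw [hF ε, h, Polynomial.eval_zero]
    · rcases poly_sign _ h with ⟨ε₀, hε₀, hs⟩ | ⟨ε₀, hε₀, hs⟩
      · exact Or.inr (Or.inl ⟨ε₀, hε₀, fun ε h1 h2 => by rw [hF ε]; exact hs ε h1 h2⟩)
      · exact Or.inr (Or.inr ⟨ε₀, hε₀, fun ε h1 h2 => by rw [hF ε]; exact hs ε h1 h2⟩)
  · constructor
    · intro hFz
      have hw := key hFz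
      have hycx : y cx = t * x cx := by
        have h0 := hw cx hcxn
        simp only [hwdef] at h0
        linarith
      have hcc : cx = cy := by
        by_contra hne
        have h1 : cx < cy := lt_of_le_of_ne hc hne
        have hycx0 : y cx = 0 := hy0 cx h1
        have ht0 : t = 0 := by rw [ht, hycx0, zero_div]
        have h2 := hw cy hcy
        simp only [hwdef, ht0] at h2
        have : y cy = 0 := by linarith
        linarith
      refine ⟨hcc, fun i hi => ?_⟩
      have h0 := hw i hi
      simp only [hwdef] at h0
      have h1 : y i = t * x i := by linarith
      rw [h1, hycx]
      ring
    · rintro ⟨hcc, hprop⟩ ε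
      have hP0 : QPaux n ρ x w = 0 := by
        rw [QPaux]
        apply Finset.sum_eq_zero
        intro i _
        apply Finset.sum_eq_zero
        intro j hj
        have hj' : j ≤ n := Nat.lt_succ_iff.mp (Finset.mem_range.mp hj)
        have hwj : w j = 0 := by
          have h2 := hprop j hj'
          simp only [hwdef, ht]
          field_simp
          linarith
        rw [hwj]
        simp
      rw [hF ε, ← hxw, hP0, Polynomial.eval_zero]
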